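/- Let F be a family of functions from the positive integers to the nonnegative integers that is product-bounded: for any f_1,...,f_k ∈ F there exists f ∈ F with f_1(n)···f_k(n) ≤ f(n) for all n ≥ 1. Let g : ℕ → ℕ_0. Suppose that for every ideal X of 2-colorings (edge 2-colored complete graphs under discrete containment), either |X_n| ≤ f(n) for all n ≥ 1 for some f ∈ F, or |X_n| ≥ g(n) for all n ≥ 1. Then for any finite set P of colors, every ideal X of edge P-colored complete graphs (under discrete containment) satisfies the same dichotomy: either |X_n| ≤ f(n) for all n ≥ 1 for some f ∈ F, or |X_n| ≥ g(n) for all n ≥ 1. -/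
import Mathlib


/-- A (directed representation of an) edge: a pair of vertices `p` with `p.1 < p.2`. -/
abbrev Edge (n : ℕ) := {p : Fin n × Fin n // p.1 < p.2}

/-- An edge-`C`-colored complete graph: a number of vertices together with a coloring
of all edges by elements of `C`. -/
abbrev Coloring (C : Type) := (n : ℕ) × (Edge n → C)

/-- Build an edge from natural numbers `i < j < n`. -/
def mkE {n : ℕ} (i j : ℕ) (hij : i < j) (hj : j < n) : Edge n :=
  ⟨(⟨i, lt_trans hij hj⟩, ⟨j, hj⟩), Fin.mk_lt_mk.mpr hij⟩

/-- The image of an edge under a strictly increasing vertex map. -/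
def edgeMap {a b : ℕ} (f : Fin a → Fin b) (hf : StrictMono f) (e : Edge a) : Edge b :=
  ⟨(f e.1.1, f e.1.2), hf e.2⟩

/-- Containment of colorings: `K ⪯ L` via a strictly increasing vertex map that sends
the color of each edge to a `le`-larger color. -/
def ColLe {C : Type} (le : C → C → Prop) (K L : Coloring C) : Prop :=
  ∃ f : Fin K.1 → Fin L.1, ∃ hf : StrictMono f,
    ∀ e : Edge K.1, le (K.2 e) (L.2 (edgeMap f hf e))

/-- A lower ideal of colorings. -/
def IsIdeal {C : Type} (le : C → C → Prop) (X : Set (Coloring C)) : Prop :=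
  ∀ K L : Coloring C, ColLe le K L → L ∈ X → K ∈ X

/-- Recolor edges with color `b` to `0` and all other edges to `1`. -/
def Rb {P : Type} [DecidableEq P] (b : P) (K : Coloring P) : Coloring (Fin 2) :=
  ⟨K.1, fun e => if K.2 e = b then 0 else 1⟩

lemma Rb_ideal {P : Type} [DecidableEq P] (b : P) (X : Set (Coloring P))
    (hX : IsIdeal (· = ·) X) : IsIdeal (· = ·) (Rb b '' X) := by
  rintro K L ⟨f, hf, hcol⟩ ⟨M, hM, rfl⟩
  obtain ⟨n, c⟩ := K
  refine ⟨⟨n, fun e => M.2 (edgeMap f hf e)⟩, hX _ M ⟨f, hf, fun e => rfl⟩ hM, ?_⟩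
  simp only [Rb]
  congr 1
  funext e
  exact (hcol e).symm

lemma Rb_inj {P : Type} [DecidableEq P] {K L : Coloring P} (hfst : K.1 = L.1)
    (h : ∀ b, Rb b K = Rb b L) : K = L := by
  obtain ⟨m, c⟩ := K
  obtain ⟨m', c'⟩ := L
  simp only at hfst
  subst hfst
  congr 1
  funext e
  have h1 := h (c e)
  have h2 := congrFun (eq_of_heq (Sigma.ext_iff.mp h1).2) e
  by_contra hne
  simp only [Rb, if_pos rfl,
    if_neg (show ¬ c' e = c e from fun hh => hne hh.symm)] at h2
  exact absurd h2 (by decide)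

lemma slice_finite {C : Type} [Finite C] (X : Set (Coloring C)) (n : ℕ) :
    Finite {K : Coloring C // K ∈ X ∧ K.1 = n} := by
  refine Finite.of_injective
    (fun K => (fun e => K.1.2 (cast (congrArg Edge K.2.2.symm) e) : Edge n → C)) ?_
  rintro ⟨⟨m, c⟩, hm, rfl⟩ ⟨⟨m', c'⟩, hm', h'⟩ h
  simp only at h'
  subst h'
  simp only at h
  simp [Subtype.ext_iff, Sigma.ext_iff]
  funext e
  exact congrFun h e

/-- Let `F` be a product-bounded family of functions and `g` a function.
If every ideal of edge 2-colored complete graphs (under discrete containment) satisfies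
the dichotomy "`|X_n| ≤ f(n)` for all `n ≥ 1` for some `f ∈ F`, or `|X_n| ≥ g(n)` for
all `n ≥ 1`", then so does every ideal of edge `P`-colored complete graphs for every
finite set of colors `P`. -/
theorem stmt_9 (F : Set (ℕ → ℕ))
    (hF : ∀ (k : ℕ) (fs : Fin k → (ℕ → ℕ)), (∀ i, fs i ∈ F) →
      ∃ f ∈ F, ∀ n : ℕ, 1 ≤ n → (∏ i, fs i n) ≤ f n)
    (g : ℕ → ℕ)
    (h2 : ∀ X : Set (Coloring (Fin 2)), IsIdeal (· = ·) X →
      (∃ f ∈ F, ∀ n : ℕ, 1 ≤ n →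
          Nat.card {K : Coloring (Fin 2) // K ∈ X ∧ K.1 = n} ≤ f n) ∨
      (∀ n : ℕ, 1 ≤ n →
          g n ≤ Nat.card {K : Coloring (Fin 2) // K ∈ X ∧ K.1 = n}))
    (P : Type) [Fintype P] [DecidableEq P]
    (X : Set (Coloring P)) (hX : IsIdeal (· = ·) X) :
    (∃ f ∈ F, ∀ n : ℕ, 1 ≤ n →
        Nat.card {K : Coloring P // K ∈ X ∧ K.1 = n} ≤ f n) ∨
    (∀ n : ℕ, 1 ≤ n →
        g n ≤ Nat.card {K : Coloring P // K ∈ X ∧ K.1 = n}) := by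
  classical
  set Y : P → Set (Coloring (Fin 2)) := fun b => Rb b '' X with hY
  have hfin : ∀ n, Finite {K : Coloring P // K ∈ X ∧ K.1 = n} := slice_finite X
  have hfin2 : ∀ b n, Finite {K : Coloring (Fin 2) // K ∈ Y b ∧ K.1 = n} :=
    fun b => slice_finite _
  have hsur : ∀ b n, Nat.card {K : Coloring (Fin 2) // K ∈ Y b ∧ K.1 = n} ≤
      Nat.card {K : Coloring P // K ∈ X ∧ K.1 = n} := by
    intro b n
    haveI := hfin n
    refine Nat.card_le_card_of_surjective
      (fun K => ⟨Rb b K.1, ⟨K.1, K.2.1, rfl⟩, K.2.2⟩) ?_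
    rintro ⟨L, ⟨M, hM, rfl⟩, hL⟩
    exact ⟨⟨M, hM, hL⟩, rfl⟩
  have hinj : ∀ n, Nat.card {K : Coloring P // K ∈ X ∧ K.1 = n} ≤
      ∏ b, Nat.card {K : Coloring (Fin 2) // K ∈ Y b ∧ K.1 = n} := by
    intro n
    haveI := fun b => hfin2 b n
    rw [← Nat.card_pi]
    refine Nat.card_le_card_of_injective
      (fun K b => ⟨Rb b K.1, ⟨K.1, K.2.1, rfl⟩, K.2.2⟩) ?_
    rintro K L h
    have hb : ∀ b, Rb b K.1 = Rb b L.1 :=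
      fun b => congrArg Subtype.val (congrFun h b)
    exact Subtype.ext (Rb_inj (K.2.2.trans L.2.2.symm) hb)
  by_cases hall : ∀ b : P, ∃ f ∈ F, ∀ n : ℕ, 1 ≤ n →
      Nat.card {K : Coloring (Fin 2) // K ∈ Y b ∧ K.1 = n} ≤ f n
  · left
    choose fb hfb hble using hall
    obtain ⟨f, hfF, hf⟩ := hF (Fintype.card P)
      (fun i => fb ((Fintype.equivFin P).symm i)) (fun i => hfb _)
    refine ⟨f, hfF, fun n hn => ?_⟩
    calc Nat.card {K : Coloring P // K ∈ X ∧ K.1 = n}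
        ≤ ∏ b, Nat.card {K : Coloring (Fin 2) // K ∈ Y b ∧ K.1 = n} := hinj n
      _ ≤ ∏ b, fb b n := Finset.prod_le_prod' (fun b _ => hble b n hn)
      _ = ∏ i, fb ((Fintype.equivFin P).symm i) n :=
          (Equiv.prod_comp (Fintype.equivFin P).symm (fun b => fb b n)).symm
      _ ≤ f n := hf n hn
  · push_neg at hall
    obtain ⟨b, hb⟩ := hall
    have hbig := (h2 (Y b) (Rb_ideal b X hX)).resolve_left (by
      intro ⟨f, hfF, hf⟩
      obtain ⟨n, hn, hlt⟩ := hb f hfF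
      exact absurd (hf n hn) (not_le.mpr hlt))
    exact Or.inr fun n hn => le_trans (hbig n hn) (hsur b n)
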